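/- Let α, β, γ, M > 0, let a < b, and let w ∈ H²((a,b)) with |w'(a)| ≤ M and |w'(b)| ≤ M. Define A_M := {x ∈ (a,b) : |w'(x)| > M} and Δ_M := ∫_{A_M} |w'(x)| dx. Then ∫_{A_M} ( α w''(x)² + β log(1 + γ w'(x)²) ) dx ≥ 4√(2/3) · α^{1/4} β^{3/4} (log(1 + γ M²))^{3/4} · √( Δ_M - M|A_M| ). -/

import Mathlib

open MeasureTheory intervalIntegral

open Set

/-- `w` is an H² function on `(a,b)` with first derivative `w'` and second derivative `w''`. -/
def IsH2On (a b : ℝ) (w w' w'' : ℝ → ℝ) : Prop :=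
  (∀ x ∈ Set.Icc a b, w x = w a + ∫ t in a..x, w' t) ∧
  (∀ x ∈ Set.Icc a b, w' x = w' a + ∫ t in a..x, w'' t) ∧
  IntervalIntegrable w' volume a b ∧
  IntervalIntegrable w'' volume a b ∧
  IntervalIntegrable (fun t => (w'' t) ^ 2) volume a b


lemma sum_le_sq_sum_sqrt {ι : Type*} (s : Finset ι) (f : ι → ℝ) (hf : ∀ i, 0 ≤ f i) :
    ∑ i ∈ s, f i ≤ (∑ i ∈ s, Real.sqrt (f i)) ^ 2 := by
  induction s using Finset.cons_induction with
  | empty => simp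
  | cons a s ha ih =>
    rw [Finset.sum_cons, Finset.sum_cons]
    have h1 : (0:ℝ) ≤ ∑ i ∈ s, Real.sqrt (f i) :=
      Finset.sum_nonneg fun i _ => Real.sqrt_nonneg _
    have h2 : Real.sqrt (f a) ^ 2 = f a := Real.sq_sqrt (hf a)
    nlinarith [Real.sqrt_nonneg (f a), mul_nonneg (Real.sqrt_nonneg (f a)) h1]

lemma sqrt_tsum_le_tsum_sqrt {ι : Type*} {f : ι → ℝ} (hf : ∀ i, 0 ≤ f i)
    (hs : Summable f) (hs2 : Summable fun i => Real.sqrt (f i)) :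
    Real.sqrt (∑' i, f i) ≤ ∑' i, Real.sqrt (f i) := by
  have h0 : (0:ℝ) ≤ ∑' i, Real.sqrt (f i) := tsum_nonneg fun i => Real.sqrt_nonneg _
  have h1 : ∑' i, f i ≤ (∑' i, Real.sqrt (f i)) ^ 2 := by
    refine Summable.tsum_le_of_sum_le hs fun F => ?_
    refine (sum_le_sq_sum_sqrt F f hf).trans ?_
    have := Summable.sum_le_tsum F (fun i _ => Real.sqrt_nonneg (f i)) hs2
    exact pow_le_pow_left₀ (Finset.sum_nonneg fun i _ => Real.sqrt_nonneg _) this 2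
  calc Real.sqrt (∑' i, f i) ≤ Real.sqrt ((∑' i, Real.sqrt (f i)) ^ 2) := Real.sqrt_le_sqrt h1
    _ = ∑' i, Real.sqrt (f i) := Real.sqrt_sq h0

lemma amgm_key {A L E l D : ℝ} (hA : 0 < A) (hL : 0 < L) (hE : 0 ≤ E) (hl : 0 ≤ l)
    (hD : 0 ≤ D) (h : D ^ 2 ≤ l ^ 3 * E / 12) :
    4 * Real.sqrt (2 / 3) * A ^ ((1:ℝ)/4) * L ^ ((3:ℝ)/4) * Real.sqrt D ≤ A * E + L * l := by
  have h12 : (0:ℝ) ≤ l ^ 3 * E / 12 := le_trans (sq_nonneg D) h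
  -- √D ≤ (l^3*E/12)^(1/4)
  have hsD : Real.sqrt D ≤ (l ^ 3 * E / 12) ^ ((1:ℝ)/4) := by
    rw [Real.sqrt_eq_rpow]
    calc D ^ ((1:ℝ)/2) = (D ^ (2:ℕ)) ^ ((1:ℝ)/4) := by
          rw [← Real.rpow_natCast D 2, ← Real.rpow_mul hD]; norm_num
      _ ≤ (l ^ 3 * E / 12) ^ ((1:ℝ)/4) :=
          Real.rpow_le_rpow (by positivity) h (by norm_num)
  -- constant juggling: √(2/3) * (l^3*E/12)^(1/4) * A^(1/4) * L^(3/4) = (A*E)^(1/4) * (L*l/3)^(3/4)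
  have hkey : Real.sqrt (2/3) * A ^ ((1:ℝ)/4) * L ^ ((3:ℝ)/4) * (l ^ 3 * E / 12) ^ ((1:ℝ)/4)
      = (A * E) ^ ((1:ℝ)/4) * (L * l / 3) ^ ((3:ℝ)/4) := by
    rw [Real.sqrt_eq_rpow]
    rw [show l ^ 3 * E / 12 = l ^ 3 * E * (1/12) by ring]
    rw [Real.mul_rpow (by positivity) (by norm_num : (0:ℝ) ≤ 1/12),
        Real.mul_rpow (by positivity) hE]
    rw [show L * l / 3 = L * (l * (1/3)) by ring]
    rw [Real.mul_rpow hL.le (by positivity), Real.mul_rpow hl (by norm_num : (0:ℝ) ≤ 1/3)]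
    rw [Real.mul_rpow hA.le hE]
    have e1 : ((l:ℝ) ^ (3:ℕ)) ^ ((1:ℝ)/4) = l ^ ((3:ℝ)/4) := by
      rw [← Real.rpow_natCast l 3, ← Real.rpow_mul hl]; norm_num
    have e2 : ((2:ℝ)/3) ^ ((1:ℝ)/2) * ((1:ℝ)/12) ^ ((1:ℝ)/4) = ((1:ℝ)/3) ^ ((3:ℝ)/4) := by
      have a1 : ((2:ℝ)/3) ^ ((1:ℝ)/2) = ((4:ℝ)/9) ^ ((1:ℝ)/4) := by
        rw [show ((4:ℝ)/9) = ((2:ℝ)/3) ^ (2:ℕ) by norm_num, ← Real.rpow_natCast _ 2,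
            ← Real.rpow_mul (by norm_num : (0:ℝ) ≤ 2/3)]
        norm_num
      have a2 : ((1:ℝ)/3) ^ ((3:ℝ)/4) = ((1:ℝ)/27) ^ ((1:ℝ)/4) := by
        rw [show ((1:ℝ)/27) = ((1:ℝ)/3) ^ (3:ℕ) by norm_num, ← Real.rpow_natCast _ 3,
            ← Real.rpow_mul (by norm_num : (0:ℝ) ≤ 1/3)]
        norm_num
      rw [a1, a2, ← Real.mul_rpow (by norm_num) (by norm_num)]
      norm_num
    rw [e1]
    calc (2/3) ^ ((1:ℝ)/2) * A ^ ((1:ℝ)/4) * L ^ ((3:ℝ)/4) *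
          (l ^ ((3:ℝ)/4) * E ^ ((1:ℝ)/4) * (1/12) ^ ((1:ℝ)/4))
        = (A ^ ((1:ℝ)/4) * E ^ ((1:ℝ)/4)) * (L ^ ((3:ℝ)/4) * (l ^ ((3:ℝ)/4) *
            ((2/3) ^ ((1:ℝ)/2) * (1/12) ^ ((1:ℝ)/4)))) := by ring
      _ = A ^ ((1:ℝ)/4) * E ^ ((1:ℝ)/4) * (L ^ ((3:ℝ)/4) * (l ^ ((3:ℝ)/4) * (1/3) ^ ((3:ℝ)/4))) := by
          rw [e2]
      _ = _ := by ring
  have hgm : (A * E) ^ ((1:ℝ)/4) * (L * l / 3) ^ ((3:ℝ)/4)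
      ≤ (1/4) * (A * E) + (3/4) * (L * l / 3) :=
    Real.geom_mean_le_arith_mean2_weighted (by norm_num) (by norm_num)
      (by positivity) (by positivity) (by norm_num)
  have hc : (0:ℝ) ≤ Real.sqrt (2/3) * A ^ ((1:ℝ)/4) * L ^ ((3:ℝ)/4) := by positivity
  calc 4 * Real.sqrt (2/3) * A ^ ((1:ℝ)/4) * L ^ ((3:ℝ)/4) * Real.sqrt D
      ≤ 4 * Real.sqrt (2/3) * A ^ ((1:ℝ)/4) * L ^ ((3:ℝ)/4) * (l ^ 3 * E / 12) ^ ((1:ℝ)/4) := by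
        have h4 : (0:ℝ) ≤ 4 * Real.sqrt (2/3) * A ^ ((1:ℝ)/4) * L ^ ((3:ℝ)/4) := by positivity
        exact mul_le_mul_of_nonneg_left hsD h4
    _ = 4 * ((A * E) ^ ((1:ℝ)/4) * (L * l / 3) ^ ((3:ℝ)/4)) := by
        rw [← hkey]; ring
    _ ≤ 4 * ((1/4) * (A * E) + (3/4) * (L * l / 3)) := by linarith
    _ = A * E + L * l := by ring

lemma cauchy_schwarz_set {μ : Measure ℝ} [IsFiniteMeasure μ] {φ g : ℝ → ℝ}
    (hφm : AEStronglyMeasurable φ μ) {C : ℝ} (hφb : ∀ᵐ x ∂μ, |φ x| ≤ C)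
    (hgm : AEStronglyMeasurable g μ) (hg2 : Integrable (fun x => g x ^ 2) μ) :
    ∫ x, φ x * g x ∂μ ≤ Real.sqrt (∫ x, φ x ^ 2 ∂μ) * Real.sqrt (∫ x, g x ^ 2 ∂μ) := by
  have hpq : (2:ℝ).HolderConjugate 2 := Real.HolderConjugate.two_two
  have hφ2 : MemLp φ (ENNReal.ofReal 2) μ :=
    MemLp.of_bound hφm C (by simpa [Real.norm_eq_abs] using hφb)
  have hg2' : MemLp g (ENNReal.ofReal 2) μ := by
    rw [show ENNReal.ofReal 2 = 2 by norm_num]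
    exact (memLp_two_iff_integrable_sq hgm).2 hg2
  have H := integral_mul_norm_le_Lp_mul_Lq hpq hφ2 hg2'
  have e1 : ∀ x : ℝ, ‖x‖ ^ (2:ℝ) = x ^ 2 := fun x => by
    rw [show (2:ℝ) = ((2:ℕ):ℝ) by norm_num, Real.rpow_natCast, Real.norm_eq_abs, sq_abs]
  simp only [e1] at H
  calc ∫ x, φ x * g x ∂μ ≤ |∫ x, φ x * g x ∂μ| := le_abs_self _
    _ ≤ ∫ x, ‖φ x * g x‖ ∂μ := by
        simpa [Real.norm_eq_abs] using norm_integral_le_integral_norm (fun x => φ x * g x) (μ := μ)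
    _ = ∫ x, ‖φ x‖ * ‖g x‖ ∂μ := by simp [norm_mul]
    _ ≤ (∫ x, φ x ^ 2 ∂μ) ^ ((1:ℝ)/2) * (∫ x, g x ^ 2 ∂μ) ^ ((1:ℝ)/2) := by
        simpa using H
    _ = Real.sqrt (∫ x, φ x ^ 2 ∂μ) * Real.sqrt (∫ x, g x ^ 2 ∂μ) := by
        rw [Real.sqrt_eq_rpow, Real.sqrt_eq_rpow]

lemma integrable_snd_prod {g : ℝ → ℝ} {c d : ℝ} (hg : IntegrableOn g (Ioo c d)) :
    Integrable (fun p : ℝ × ℝ => g p.2)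
      ((volume.restrict (Ioo c d)).prod (volume.restrict (Ioo c d))) := by
  set μ := volume.restrict (Ioo c d)
  haveI : IsFiniteMeasure μ := ⟨by
    rw [Measure.restrict_apply_univ]; exact measure_Ioo_lt_top⟩
  have hmap : Measure.map Prod.snd (μ.prod μ) = (μ univ) • μ := Measure.map_snd_prod
  have hints : Integrable g ((μ univ) • μ) :=
    hg.smul_measure (measure_ne_top μ univ)
  have hsm : AEStronglyMeasurable g (Measure.map Prod.snd (μ.prod μ)) := by
    rw [hmap]; exact hints.aestronglyMeasurable
  exact (integrable_map_measure hsm measurable_snd.aemeasurable).1 (by rwa [hmap])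

lemma fubini_left {g : ℝ → ℝ} {c d : ℝ} (hcd : c < d) (hg : IntegrableOn g (Ioo c d)) :
    ∫ t in Ioo c d, (∫ s in c..t, g s) = ∫ s in Ioo c d, (d - s) * g s := by
  set μ := volume.restrict (Ioo c d) with hμ
  haveI : IsFiniteMeasure μ := ⟨by
    rw [Measure.restrict_apply_univ]; exact measure_Ioo_lt_top⟩
  have hG := integrable_snd_prod hg
  have hFint : Integrable (Function.uncurry fun t s => if s < t then g s else 0) (μ.prod μ) := by
    have := hG.indicator (s := {p : ℝ × ℝ | p.2 < p.1})
      (measurableSet_lt measurable_snd measurable_fst)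
    refine this.congr (Filter.Eventually.of_forall fun p => ?_)
    by_cases h : p.2 < p.1 <;> simp [Function.uncurry, Set.indicator_apply, h]
  have hswap := integral_integral_swap hFint
  have hL : ∫ t, (∫ s, (if s < t then g s else 0) ∂μ) ∂μ = ∫ t in Ioo c d, (∫ s in c..t, g s) := by
    refine setIntegral_congr_fun measurableSet_Ioo fun t ht => ?_
    have h1 : ∀ s, (if s < t then g s else 0) = (Iio t).indicator g s := fun s => by
      simp [Set.indicator_apply]
    simp_rw [h1]
    rw [hμ, MeasureTheory.integral_indicator measurableSet_Iio, Measure.restrict_restrict measurableSet_Iio]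
    have h2 : Iio t ∩ Ioo c d = Ioo c t := by
      ext x; simp only [mem_inter_iff, mem_Iio, mem_Ioo]
      exact ⟨fun ⟨a1, a2, a3⟩ => ⟨a2, a1⟩, fun ⟨a1, a2⟩ => ⟨a2, a1, a2.trans ht.2⟩⟩
    rw [h2, intervalIntegral.integral_of_le ht.1.le, integral_Ioc_eq_integral_Ioo]
  have hR : ∫ s, (∫ t, (if s < t then g s else 0) ∂μ) ∂μ = ∫ s in Ioo c d, (d - s) * g s := by
    refine setIntegral_congr_fun measurableSet_Ioo fun s hs => ?_
    have h1 : ∀ t, (if s < t then g s else 0) = (Ioi s).indicator (fun _ => g s) t := fun t => by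
      simp [Set.indicator_apply]
    simp_rw [h1]
    rw [hμ, MeasureTheory.integral_indicator measurableSet_Ioi, Measure.restrict_restrict measurableSet_Ioi]
    have h2 : Ioi s ∩ Ioo c d = Ioo s d := by
      ext x; simp only [mem_inter_iff, mem_Ioi, mem_Ioo]
      exact ⟨fun ⟨a1, a2, a3⟩ => ⟨a1, a3⟩, fun ⟨a1, a2⟩ => ⟨a1, hs.1.trans a1, a2⟩⟩
    rw [h2, setIntegral_const, Real.volume_real_Ioo_of_le (by linarith [hs.2] : s ≤ d)]
    simp [smul_eq_mul]
  rw [← hL, ← hR]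
  exact hswap

lemma fubini_right {g : ℝ → ℝ} {c d : ℝ} (hcd : c < d) (hg : IntegrableOn g (Ioo c d)) :
    ∫ t in Ioo c d, (∫ s in t..d, g s) = ∫ s in Ioo c d, (s - c) * g s := by
  set μ := volume.restrict (Ioo c d) with hμ
  haveI : IsFiniteMeasure μ := ⟨by
    rw [Measure.restrict_apply_univ]; exact measure_Ioo_lt_top⟩
  have hG := integrable_snd_prod hg
  have hFint : Integrable (Function.uncurry fun t s => if t < s then g s else 0) (μ.prod μ) := by
    have := hG.indicator (s := {p : ℝ × ℝ | p.1 < p.2})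
      (measurableSet_lt measurable_fst measurable_snd)
    refine this.congr (Filter.Eventually.of_forall fun p => ?_)
    by_cases h : p.1 < p.2 <;> simp [Function.uncurry, Set.indicator_apply, h]
  have hswap := integral_integral_swap hFint
  have hL : ∫ t, (∫ s, (if t < s then g s else 0) ∂μ) ∂μ = ∫ t in Ioo c d, (∫ s in t..d, g s) := by
    refine setIntegral_congr_fun measurableSet_Ioo fun t ht => ?_
    have h1 : ∀ s, (if t < s then g s else 0) = (Ioi t).indicator g s := fun s => by
      simp [Set.indicator_apply]
    simp_rw [h1]
    rw [hμ, MeasureTheory.integral_indicator measurableSet_Ioi, Measure.restrict_restrict measurableSet_Ioi]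
    have h2 : Ioi t ∩ Ioo c d = Ioo t d := by
      ext x; simp only [mem_inter_iff, mem_Ioi, mem_Ioo]
      exact ⟨fun ⟨a1, a2, a3⟩ => ⟨a1, a3⟩, fun ⟨a1, a2⟩ => ⟨a1, ht.1.trans a1, a2⟩⟩
    rw [h2, intervalIntegral.integral_of_le ht.2.le, integral_Ioc_eq_integral_Ioo]
  have hR : ∫ s, (∫ t, (if t < s then g s else 0) ∂μ) ∂μ = ∫ s in Ioo c d, (s - c) * g s := by
    refine setIntegral_congr_fun measurableSet_Ioo fun s hs => ?_
    have h1 : ∀ t, (if t < s then g s else 0) = (Iio s).indicator (fun _ => g s) t := fun t => by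
      simp [Set.indicator_apply]
    simp_rw [h1]
    rw [hμ, MeasureTheory.integral_indicator measurableSet_Iio, Measure.restrict_restrict measurableSet_Iio]
    have h2 : Iio s ∩ Ioo c d = Ioo c s := by
      ext x; simp only [mem_inter_iff, mem_Iio, mem_Ioo]
      exact ⟨fun ⟨a1, a2, a3⟩ => ⟨a2, a1⟩, fun ⟨a1, a2⟩ => ⟨a2, a1, a2.trans hs.2⟩⟩
    rw [h2, setIntegral_const, Real.volume_real_Ioo_of_le (by linarith [hs.1] : c ≤ s)]
    simp [smul_eq_mul]
  rw [← hL, ← hR]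
  exact hswap

set_option maxHeartbeats 1600000 in
lemma component_bound (α β γ M : ℝ) (hα : 0 < α) (hβ : 0 < β) (hγ : 0 < γ) (hM : 0 < M)
    {a b c d : ℝ} (hac : a ≤ c) (hcd : c < d) (hdb : d ≤ b)
    {w' w'' : ℝ → ℝ}
    (hFTC : ∀ x ∈ Icc a b, w' x = w' a + ∫ t in a..x, w'' t)
    (hw''int : IntervalIntegrable w'' volume a b)
    (hw''sq : IntervalIntegrable (fun t => (w'' t) ^ 2) volume a b)
    (hbig : ∀ x ∈ Ioo c d, M < |w' x|)
    (hvc : |w' c| ≤ M) (hvd : |w' d| ≤ M)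
    (hlog : IntegrableOn (fun x => α * (w'' x) ^ 2 + β * Real.log (1 + γ * (w' x) ^ 2))
      (Ioo c d) volume) :
    4 * Real.sqrt (2 / 3) * α ^ ((1:ℝ)/4) * β ^ ((3:ℝ)/4) *
        (Real.log (1 + γ * M ^ 2)) ^ ((3:ℝ)/4) *
        Real.sqrt ((∫ x in Ioo c d, |w' x|) - M * (d - c)) ≤
      ∫ x in Ioo c d, (α * (w'' x) ^ 2 + β * Real.log (1 + γ * (w' x) ^ 2)) := by
  have hab : a ≤ b := hac.trans (hcd.le.trans hdb)
  have hl : (0:ℝ) < d - c := by linarith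
  set L₀ := Real.log (1 + γ * M ^ 2) with hL₀
  have hγM : 0 < γ * M ^ 2 := mul_pos hγ (pow_pos hM 2)
  have hL₀pos : 0 < L₀ := Real.log_pos (by linarith)
  -- subinterval inclusion
  have hsub : Icc c d ⊆ Icc a b := Icc_subset_Icc hac hdb
  have huIcc : uIcc c d ⊆ uIcc a b := by
    rw [uIcc_of_le hcd.le, uIcc_of_le hab]; exact hsub
  -- continuity of w' on [a,b]
  have hw'cont : ContinuousOn w' (Icc a b) := by
    have h1 : ContinuousOn (fun x => w' a + ∫ t in a..x, w'' t) (Icc a b) := by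
      rw [show Icc a b = uIcc a b from (uIcc_of_le hab).symm]
      exact continuousOn_const.add (continuousOn_primitive_interval' hw''int left_mem_uIcc)
    exact h1.congr hFTC
  -- sign constancy
  obtain ⟨σ, hσ, hσw⟩ : ∃ σ : ℝ, (σ = 1 ∨ σ = -1) ∧ ∀ x ∈ Ioo c d, σ * w' x = |w' x| := by
    set x₀ := (c + d) / 2 with hx₀
    have hx₀mem : x₀ ∈ Ioo c d := ⟨by linarith, by linarith⟩
    have hx₀ne : w' x₀ ≠ 0 := fun h => by
      have := hbig x₀ hx₀mem; rw [h] at this; simp at this; linarith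
    have hsame : ∀ x ∈ Ioo c d, ∀ y ∈ Ioo c d, 0 < w' x → 0 < - w' y → False := by
      intro x hx y hy hpx hny
      have huxy : uIcc x y ⊆ Ioo c d := Set.ordConnected_Ioo.uIcc_subset hx hy
      have hcont : ContinuousOn w' (uIcc x y) :=
        hw'cont.mono (huxy.trans (Ioo_subset_Icc_self.trans hsub))
      have h0 : (0:ℝ) ∈ uIcc (w' x) (w' y) := by
        rw [Set.mem_uIcc]; right; constructor <;> linarith
      obtain ⟨z, hz, hz0⟩ := intermediate_value_uIcc hcont h0
      have := hbig z (huxy hz)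
      rw [hz0] at this; simp at this; linarith
    rcases lt_or_gt_of_ne hx₀ne with hneg | hpos
    · refine ⟨-1, Or.inr rfl, fun x hx => ?_⟩
      have : w' x < 0 := by
        by_contra h
        push_neg at h
        rcases h.lt_or_eq with h' | h'
        · exact hsame x hx x₀ hx₀mem h' (by linarith)
        · have := hbig x hx; rw [← h'] at this; simp at this; linarith
      rw [abs_of_neg this]; ring
    · refine ⟨1, Or.inl rfl, fun x hx => ?_⟩
      have : 0 < w' x := by
        by_contra h
        push_neg at h
        rcases h.lt_or_eq with h' | h'
        · exact hsame x₀ hx₀mem x hx hpos (by linarith)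
        · have := hbig x hx; rw [h'] at this; simp at this; linarith
      rw [abs_of_pos this]; ring
  have hσsq : σ ^ 2 = 1 := by rcases hσ with h | h <;> rw [h] <;> norm_num
  have hσabs : |σ| = 1 := by rcases hσ with h | h <;> rw [h] <;> norm_num
  set v : ℝ → ℝ := fun t => σ * w' t - M with hv
  set g : ℝ → ℝ := fun t => σ * w'' t with hg
  -- FTC on [c,d]
  have hFTCc : ∀ t ∈ Icc c d, v t = v c + ∫ s in c..t, g s := by
    intro t ht
    have htab : t ∈ Icc a b := hsub ht
    have hcab : c ∈ Icc a b := hsub ⟨le_refl c, hcd.le⟩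
    have h1 : IntervalIntegrable w'' volume a t := hw''int.mono_set
      (uIcc_subset_uIcc left_mem_uIcc (by rw [uIcc_of_le hab]; exact htab))
    have h2 : IntervalIntegrable w'' volume a c := hw''int.mono_set
      (uIcc_subset_uIcc left_mem_uIcc (by rw [uIcc_of_le hab]; exact hcab))
    have h3 : w' t - w' c = ∫ s in c..t, w'' s := by
      rw [hFTC t htab, hFTC c hcab]
      rw [add_sub_add_left_eq_sub]
      exact intervalIntegral.integral_interval_sub_left h1 h2
    have h4 : (∫ s in c..t, g s) = σ * ∫ s in c..t, w'' s := by
      simp only [hg]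
      exact intervalIntegral.integral_const_mul σ w''
    simp only [hv]
    rw [h4, ← h3]; ring
  -- integrability on (c,d)
  have hw''Ioo : IntegrableOn w'' (Ioo c d) volume :=
    ((hw''int.mono_set huIcc).1).mono_set Ioo_subset_Ioc_self
  have hgIoo : IntegrableOn g (Ioo c d) volume := hw''Ioo.const_mul σ
  have hgsq : ∀ t, g t ^ 2 = w'' t ^ 2 := fun t => by
    simp only [hg]; rw [mul_pow, hσsq, one_mul]
  have hw''sqIoo : IntegrableOn (fun t => w'' t ^ 2) (Ioo c d) volume :=
    ((hw''sq.mono_set huIcc).1).mono_set Ioo_subset_Ioc_self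
  have hgsqIoo : IntegrableOn (fun t => g t ^ 2) (Ioo c d) volume := by
    refine hw''sqIoo.congr_fun (fun t _ => (hgsq t).symm) measurableSet_Ioo
  have hvcont : ContinuousOn v (Icc c d) :=
    ((continuousOn_const.mul (hw'cont.mono hsub)).sub continuousOn_const)
  have hvIoo : IntegrableOn v (Ioo c d) volume :=
    (hvcont.integrableOn_Icc).mono_set Ioo_subset_Icc_self
  have hgcd : IntervalIntegrable g volume c d := by
    have : IntervalIntegrable w'' volume c d := hw''int.mono_set huIcc
    exact this.const_mul σ
  have hPrimCont : ContinuousOn (fun t => ∫ s in c..t, g s) (Icc c d) := by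
    rw [show Icc c d = uIcc c d from (uIcc_of_le hcd.le).symm]
    exact continuousOn_primitive_interval' hgcd left_mem_uIcc
  have hPrimIoo : IntegrableOn (fun t => ∫ s in c..t, g s) (Ioo c d) volume :=
    (hPrimCont.integrableOn_Icc).mono_set Ioo_subset_Icc_self
  set D := ∫ x in Ioo c d, v x with hD
  -- boundary values nonpositive
  have hvc' : v c ≤ 0 := by
    have : σ * w' c ≤ |σ * w' c| := le_abs_self _
    rw [abs_mul, hσabs, one_mul] at this
    simp only [hv]; linarith
  have hvd' : v d ≤ 0 := by
    have : σ * w' d ≤ |σ * w' d| := le_abs_self _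
    rw [abs_mul, hσabs, one_mul] at this
    simp only [hv]; linarith
  -- identity A
  have hIdA : D = v c * (d - c) + ∫ s in Ioo c d, (d - s) * g s := by
    have h1 : D = ∫ t in Ioo c d, (v c + ∫ s in c..t, g s) := by
      refine setIntegral_congr_fun measurableSet_Ioo fun t ht => ?_
      exact hFTCc t (Ioo_subset_Icc_self ht)
    rw [h1, integral_add (integrableOn_const (C := v c) measure_Ioo_lt_top.ne) hPrimIoo,
      setIntegral_const, Real.volume_real_Ioo_of_le hcd.le, smul_eq_mul,
      fubini_left hcd hgIoo]
    ring
  -- identity B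
  have hIdB : D = v d * (d - c) - ∫ s in Ioo c d, (s - c) * g s := by
    have hvdeq : v d = v c + ∫ s in c..d, g s := hFTCc d ⟨hcd.le, le_refl d⟩
    have h1 : D = ∫ t in Ioo c d, (v d - ∫ s in t..d, g s) := by
      refine setIntegral_congr_fun measurableSet_Ioo fun t ht => ?_
      have htIcc : t ∈ Icc c d := Ioo_subset_Icc_self ht
      have h2 : IntervalIntegrable g volume c t := hgcd.mono_set
        (uIcc_subset_uIcc left_mem_uIcc (by rw [uIcc_of_le hcd.le]; exact htIcc))
      have h3 : (∫ s in c..d, g s) - ∫ s in c..t, g s = ∫ s in t..d, g s :=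
        intervalIntegral.integral_interval_sub_left hgcd h2
      rw [hFTCc t htIcc, hvdeq]
      linarith [h3]
    have h4 : IntegrableOn (fun t => ∫ s in t..d, g s) (Ioo c d) volume := by
      have hconst : IntegrableOn (fun _ : ℝ => ∫ s in c..d, g s) (Ioo c d) volume :=
        integrableOn_const measure_Ioo_lt_top.ne
      have h5 : IntegrableOn (fun t => (∫ s in c..d, g s) - ∫ s in c..t, g s)
          (Ioo c d) volume := hconst.sub hPrimIoo
      refine IntegrableOn.congr_fun h5 (fun t ht => ?_) measurableSet_Ioo
      have htIcc : t ∈ Icc c d := Ioo_subset_Icc_self ht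
      have h2 : IntervalIntegrable g volume c t := hgcd.mono_set
        (uIcc_subset_uIcc left_mem_uIcc (by rw [uIcc_of_le hcd.le]; exact htIcc))
      exact intervalIntegral.integral_interval_sub_left hgcd h2
    rw [h1, integral_sub (integrableOn_const (C := v d) measure_Ioo_lt_top.ne) h4,
      setIntegral_const, Real.volume_real_Ioo_of_le hcd.le, smul_eq_mul,
      fubini_right hcd hgIoo]
    ring
  -- integrability of weighted integrands
  have hmul1 : IntegrableOn (fun s => (d - s) * g s) (Ioo c d) volume := by
    refine Integrable.bdd_mul (c := d - c) hgIoo ?_ ?_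
    · exact (continuous_const.sub continuous_id).aestronglyMeasurable
    · refine (ae_restrict_iff' measurableSet_Ioo).2 (Filter.Eventually.of_forall fun s hs => ?_)
      rw [Real.norm_eq_abs, abs_of_pos (by linarith [hs.2] : (0:ℝ) < d - s)]
      linarith [hs.1]
  have hmul2 : IntegrableOn (fun s => (s - c) * g s) (Ioo c d) volume := by
    refine Integrable.bdd_mul (c := d - c) hgIoo ?_ ?_
    · exact (continuous_id.sub continuous_const).aestronglyMeasurable
    · refine (ae_restrict_iff' measurableSet_Ioo).2 (Filter.Eventually.of_forall fun s hs => ?_)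
      rw [Real.norm_eq_abs, abs_of_pos (by linarith [hs.1] : (0:ℝ) < s - c)]
      linarith [hs.2]
  -- 2D ≤ ∫ (c+d-2s) g
  have h2D : 2 * D ≤ ∫ s in Ioo c d, (c + d - 2 * s) * g s := by
    have hsplit : ∫ s in Ioo c d, (c + d - 2 * s) * g s
        = (∫ s in Ioo c d, (d - s) * g s) - ∫ s in Ioo c d, (s - c) * g s := by
      rw [← integral_sub hmul1 hmul2]
      refine setIntegral_congr_fun measurableSet_Ioo fun s _ => ?_
      ring
    have := hIdA
    have := hIdB
    have hbnd : (v c + v d) * (d - c) ≤ 0 :=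
      mul_nonpos_of_nonpos_of_nonneg (by linarith) hl.le
    nlinarith [hIdA, hIdB]
  -- Cauchy-Schwarz
  set E := ∫ x in Ioo c d, (w'' x) ^ 2 with hE
  have hEnonneg : 0 ≤ E := setIntegral_nonneg measurableSet_Ioo fun x _ => sq_nonneg _
  have hCS : (∫ s in Ioo c d, (c + d - 2 * s) * g s)
      ≤ Real.sqrt (∫ s in Ioo c d, (c + d - 2 * s) ^ 2) * Real.sqrt E := by
    haveI : IsFiniteMeasure (volume.restrict (Ioo c d)) := ⟨by
      rw [Measure.restrict_apply_univ]; exact measure_Ioo_lt_top⟩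
    have hgE : (∫ s in Ioo c d, g s ^ 2) = E := by
      refine setIntegral_congr_fun measurableSet_Ioo fun s _ => hgsq s
    have hφb : ∀ᵐ s ∂(volume.restrict (Ioo c d)), |c + d - 2 * s| ≤ d - c := by
      refine (ae_restrict_iff' measurableSet_Ioo).2 (Filter.Eventually.of_forall fun s hs => ?_)
      rw [abs_le]; constructor <;> [linarith [hs.2]; linarith [hs.1]]
    have := cauchy_schwarz_set (μ := volume.restrict (Ioo c d))
      (φ := fun s => c + d - 2 * s) (g := g) (C := d - c)
      ((continuous_const.sub (continuous_const.mul continuous_id)).aestronglyMeasurable)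
      hφb hgIoo.aestronglyMeasurable hgsqIoo
    rw [hgE] at this; exact this
  -- compute ∫ (c+d-2s)^2 = (d-c)^3/3
  have hquad : (∫ s in Ioo c d, (c + d - 2 * s) ^ 2) = (d - c) ^ 3 / 3 := by
    have h1 : (∫ s in Ioo c d, (c + d - 2 * s) ^ 2)
        = ∫ s in c..d, (c + d - 2 * s) ^ 2 := by
      rw [intervalIntegral.integral_of_le hcd.le, integral_Ioc_eq_integral_Ioo]
    rw [h1]
    have hderiv : ∀ s ∈ uIcc c d, HasDerivAt (fun x => -(c + d - 2 * x) ^ 3 / 6)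
        ((c + d - 2 * s) ^ 2) s := by
      intro s _
      have h2 : HasDerivAt (fun x => c + d - 2 * x) (-2) s := by
        simpa using ((hasDerivAt_id s).const_mul 2).const_sub (c + d)
      have h3 := (h2.pow 3).neg.div_const 6
      have e : (c + d - 2 * s) ^ 2 = -(((3:ℕ):ℝ) * (c + d - 2 * s) ^ (3 - 1) * -2) / 6 := by
        push_cast; ring
      rw [e]; exact h3
    rw [intervalIntegral.integral_eq_sub_of_hasDerivAt hderiv
      (Continuous.intervalIntegrable ((continuous_const.sub (continuous_const.mul continuous_id)).pow 2) c d)]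
    ring
  -- D² ≤ (d-c)³ E / 12
  have hD0 : 0 ≤ D := setIntegral_nonneg measurableSet_Ioo fun x hx => by
    have := hbig x hx
    have := hσw x hx
    simp only [hv]; linarith
  have hDsq : D ^ 2 ≤ (d - c) ^ 3 * E / 12 := by
    have hR : 2 * D ≤ Real.sqrt ((d - c) ^ 3 / 3) * Real.sqrt E := by
      rw [← hquad]; exact h2D.trans hCS
    have hRnn : 0 ≤ Real.sqrt ((d - c) ^ 3 / 3) * Real.sqrt E :=
      mul_nonneg (Real.sqrt_nonneg _) (Real.sqrt_nonneg _)
    have hsq : (Real.sqrt ((d - c) ^ 3 / 3) * Real.sqrt E) ^ 2 = (d - c) ^ 3 / 3 * E := by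
      rw [mul_pow, Real.sq_sqrt (by positivity), Real.sq_sqrt hEnonneg]
    nlinarith [hR, hRnn, hD0]
  -- lower bound for RHS
  have hαsqInt : IntegrableOn (fun x => α * (w'' x) ^ 2) (Ioo c d) volume :=
    hw''sqIoo.const_mul α
  have hlogInt : IntegrableOn (fun x => β * Real.log (1 + γ * (w' x) ^ 2)) (Ioo c d) volume := by
    have h1 : IntegrableOn (fun x => (α * (w'' x) ^ 2 + β * Real.log (1 + γ * (w' x) ^ 2))
        - α * (w'' x) ^ 2) (Ioo c d) volume := hlog.sub hαsqInt
    refine IntegrableOn.congr_fun h1 (fun x _ => by ring) measurableSet_Ioo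
  have hRHS : α * E + (β * L₀) * (d - c)
      ≤ ∫ x in Ioo c d, (α * (w'' x) ^ 2 + β * Real.log (1 + γ * (w' x) ^ 2)) := by
    rw [integral_add hαsqInt hlogInt, MeasureTheory.integral_const_mul]
    have h2 : (β * L₀) * (d - c) ≤ ∫ x in Ioo c d, β * Real.log (1 + γ * (w' x) ^ 2) := by
      have h3 : ∫ (_ : ℝ) in Ioo c d, β * L₀ = (β * L₀) * (d - c) := by
        rw [setIntegral_const, Real.volume_real_Ioo_of_le hcd.le, smul_eq_mul]
        ring
      rw [← h3]
      refine setIntegral_mono_on (integrableOn_const measure_Ioo_lt_top.ne)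
        hlogInt measurableSet_Ioo fun x hx => ?_
      have h4 : M ^ 2 < (w' x) ^ 2 := by
        have h5 := hbig x hx
        have := sq_abs (w' x)
        nlinarith
      have h6 : (1:ℝ) + γ * M ^ 2 ≤ 1 + γ * (w' x) ^ 2 := by nlinarith
      exact mul_le_mul_of_nonneg_left
        (Real.log_le_log (by nlinarith) h6) hβ.le
    linarith [h2]
  -- conclude via AM-GM
  have hDeq : (∫ x in Ioo c d, |w' x|) - M * (d - c) = D := by
    have h1 : (∫ x in Ioo c d, |w' x|) = ∫ x in Ioo c d, (v x + M) := by
      refine setIntegral_congr_fun measurableSet_Ioo fun x hx => ?_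
      have := hσw x hx
      simp only [hv]; linarith
    rw [h1, integral_add hvIoo (integrableOn_const (C := M) measure_Ioo_lt_top.ne),
      setIntegral_const, Real.volume_real_Ioo_of_le hcd.le, smul_eq_mul]
    ring
  have hfin := amgm_key (A := α) (L := β * L₀) (E := E) (l := d - c) (D := D)
    hα (mul_pos hβ hL₀pos) hEnonneg hl.le hD0 hDsq
  have hmulr : (β * L₀) ^ ((3:ℝ)/4) = β ^ ((3:ℝ)/4) * L₀ ^ ((3:ℝ)/4) :=
    Real.mul_rpow hβ.le hL₀pos.le
  rw [hDeq]
  calc 4 * Real.sqrt (2/3) * α ^ ((1:ℝ)/4) * β ^ ((3:ℝ)/4) * L₀ ^ ((3:ℝ)/4) * Real.sqrt D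
      = 4 * Real.sqrt (2/3) * α ^ ((1:ℝ)/4) * (β * L₀) ^ ((3:ℝ)/4) * Real.sqrt D := by
        rw [hmulr]; ring
    _ ≤ α * E + (β * L₀) * (d - c) := hfin
    _ ≤ _ := hRHS

lemma open_subset_decomp {U : Set ℝ} {a b : ℝ} (hU : IsOpen U) (hsub : U ⊆ Ioo a b) :
    ∃ C : Set (Set ℝ), C.Countable ∧ ⋃₀ C = U ∧
      (∀ S ∈ C, ∀ T ∈ C, S ≠ T → Disjoint S T) ∧
      ∀ S ∈ C, ∃ c d : ℝ, a ≤ c ∧ c < d ∧ d ≤ b ∧ S = Ioo c d ∧ c ∉ U ∧ d ∉ U := by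
  classical
  have hglue : ∀ S ∈ connectedComponentIn U '' U,
      ∀ T ∈ connectedComponentIn U '' U, (S ∩ T).Nonempty → S = T := by
    rintro S ⟨x, hx, rfl⟩ T ⟨y, hy, rfl⟩ ⟨z, hzS, hzT⟩
    rw [connectedComponentIn_eq hzS, connectedComponentIn_eq hzT]
  refine ⟨connectedComponentIn U '' U, ?_, ?_, ?_, ?_⟩
  case refine_2 =>
    apply Subset.antisymm
    · rintro x ⟨S, ⟨y, hy, rfl⟩, hxS⟩
      exact connectedComponentIn_subset U y hxS
    · intro x hx
      exact ⟨connectedComponentIn U x, mem_image_of_mem _ hx, mem_connectedComponentIn hx⟩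
  case refine_3 =>
    intro S hS T hT hne
    by_contra hdis
    exact hne (hglue S hS T hT (Set.not_disjoint_iff_nonempty_inter.1 hdis))
  case refine_1 =>
    have hDR : DenseRange ((↑) : ℚ → ℝ) := Rat.denseRange_cast
    have hops : ∀ S ∈ connectedComponentIn U '' U, ∃ q : ℚ, (q : ℝ) ∈ S := by
      rintro S ⟨x, hx, rfl⟩
      obtain ⟨q, hq⟩ := hDR.exists_mem_open hU.connectedComponentIn
        ⟨x, mem_connectedComponentIn hx⟩
      exact ⟨q, hq⟩
    rw [Set.countable_iff_exists_injective]
    choose f hf using fun S : connectedComponentIn U '' U => hops S S.2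
    refine ⟨fun S => Encodable.encode (f S), fun S T h => ?_⟩
    have hq : f S = f T := Encodable.encode_injective h
    refine Subtype.ext (hglue S.1 S.2 T.1 T.2 ⟨(f S : ℝ), hf S, by rw [hq]; exact hf T⟩)
  case refine_4 =>
    rintro S ⟨x, hx, rfl⟩
    set S := connectedComponentIn U x with hSdef
    have hSopen : IsOpen S := hU.connectedComponentIn
    have hSne : S.Nonempty := ⟨x, mem_connectedComponentIn hx⟩
    have hSsub : S ⊆ U := connectedComponentIn_subset U x
    have hSpre : IsPreconnected S := isPreconnected_connectedComponentIn
    have hSIoo : S ⊆ Ioo a b := hSsub.trans hsub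
    have hbb : BddBelow S := bddBelow_Ioo.mono hSIoo
    have hba : BddAbove S := bddAbove_Ioo.mono hSIoo
    set c := sInf S with hc
    set d := sSup S with hd
    have hcne : c ∉ S := by
      intro hcS
      obtain ⟨ε, hε, hball⟩ := Metric.isOpen_iff.1 hSopen c hcS
      have : c - ε / 2 ∈ S := hball (by
        rw [Real.ball_eq_Ioo]; constructor <;> [linarith; linarith])
      have := csInf_le hbb this
      linarith
    have hdne : d ∉ S := by
      intro hdS
      obtain ⟨ε, hε, hball⟩ := Metric.isOpen_iff.1 hSopen d hdS
      have : d + ε / 2 ∈ S := hball (by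
        rw [Real.ball_eq_Ioo]; constructor <;> [linarith; linarith])
      have := le_csSup hba this
      linarith
    have hSeq : S = Ioo c d := by
      apply Subset.antisymm
      · intro y hy
        have h1 : c ≤ y := csInf_le hbb hy
        have h2 : y ≤ d := le_csSup hba hy
        constructor
        · rcases h1.lt_or_eq with h | h
          · exact h
          · exact absurd (h ▸ hy) hcne
        · rcases h2.lt_or_eq with h | h
          · exact h
          · exact absurd (h ▸ hy) hdne
      · exact (IsConnected.Ioo_csInf_csSup_subset ⟨hSne, hSpre⟩ hbb hba)
    obtain ⟨y, hy⟩ := id hSne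
    have hyIoo : y ∈ Ioo c d := hSeq ▸ hy
    have hcd : c < d := hyIoo.1.trans hyIoo.2
    have hacb : a ≤ c := le_csInf hSne fun z hz => (hSIoo hz).1.le
    have hdbb : d ≤ b := csSup_le hSne fun z hz => (hSIoo hz).2.le
    refine ⟨c, d, hacb, hcd, hdbb, hSeq, ?_, ?_⟩
    · intro hcU
      obtain ⟨ε, hε, hball⟩ := Metric.isOpen_iff.1 hU c hcU
      set ε' := min ε (d - c) with hε'
      have hε'pos : 0 < ε' := lt_min hε (by linarith)
      have hball' : Ioo (c - ε') (c + ε') ⊆ U := fun z hz => hball (by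
        rw [Real.ball_eq_Ioo]
        constructor
        · have := min_le_left ε (d - c); linarith [hz.1]
        · have := min_le_left ε (d - c); linarith [hz.2])
      have hp : c + ε' / 2 ∈ S := by
        rw [hSeq]
        constructor
        · linarith
        · have := min_le_right ε (d - c); linarith
      have hp2 : c + ε' / 2 ∈ Ioo (c - ε') (c + ε') := by constructor <;> linarith
      have hT : IsPreconnected (S ∪ Ioo (c - ε') (c + ε')) :=
        IsPreconnected.union (c + ε' / 2) hp hp2 hSpre isPreconnected_Ioo
      have hTsub : S ∪ Ioo (c - ε') (c + ε') ⊆ U := union_subset hSsub hball'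
      have hTS : S ∪ Ioo (c - ε') (c + ε') ⊆ S := by
        rw [hSdef]
        exact hT.subset_connectedComponentIn (Or.inl (hSdef ▸ mem_connectedComponentIn hx)) hTsub
      have : c - ε' / 2 ∈ S := hTS (Or.inr (by constructor <;> linarith))
      rw [hSeq] at this
      linarith [this.1]
    · intro hdU
      obtain ⟨ε, hε, hball⟩ := Metric.isOpen_iff.1 hU d hdU
      set ε' := min ε (d - c) with hε'
      have hε'pos : 0 < ε' := lt_min hε (by linarith)
      have hball' : Ioo (d - ε') (d + ε') ⊆ U := fun z hz => hball (by
        rw [Real.ball_eq_Ioo]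
        constructor
        · have := min_le_left ε (d - c); linarith [hz.1]
        · have := min_le_left ε (d - c); linarith [hz.2])
      have hp : d - ε' / 2 ∈ S := by
        rw [hSeq]
        constructor
        · have := min_le_right ε (d - c); linarith
        · linarith
      have hp2 : d - ε' / 2 ∈ Ioo (d - ε') (d + ε') := by constructor <;> linarith
      have hT : IsPreconnected (S ∪ Ioo (d - ε') (d + ε')) :=
        IsPreconnected.union (d - ε' / 2) hp hp2 hSpre isPreconnected_Ioo
      have hTsub : S ∪ Ioo (d - ε') (d + ε') ⊆ U := union_subset hSsub hball'
      have hTS : S ∪ Ioo (d - ε') (d + ε') ⊆ S := by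
        rw [hSdef]
        exact hT.subset_connectedComponentIn (Or.inl (hSdef ▸ mem_connectedComponentIn hx)) hTsub
      have : d + ε' / 2 ∈ S := hTS (Or.inr (by constructor <;> linarith))
      rw [hSeq] at this
      linarith [this.2]

set_option maxHeartbeats 1600000 in
theorem perona_malik_energy_lower_bound (α β γ M a b : ℝ)
    (hα : 0 < α) (hβ : 0 < β) (hγ : 0 < γ) (hM : 0 < M) (hab : a < b)
    (w w' w'' : ℝ → ℝ) (hH2 : IsH2On a b w w' w'')
    (hwa : |w' a| ≤ M) (hwb : |w' b| ≤ M)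
    (hint1 : IntegrableOn
      (fun x => α * (w'' x) ^ 2 + β * Real.log (1 + γ * (w' x) ^ 2))
      {x ∈ Set.Ioo a b | M < |w' x|} volume)
    (hint2 : IntegrableOn (fun x => |w' x|) {x ∈ Set.Ioo a b | M < |w' x|} volume) :
    4 * Real.sqrt (2 / 3) * α ^ ((1 : ℝ) / 4) * β ^ ((3 : ℝ) / 4) *
        (Real.log (1 + γ * M ^ 2)) ^ ((3 : ℝ) / 4) *
        Real.sqrt ((∫ x in {x ∈ Set.Ioo a b | M < |w' x|}, |w' x|) -
          M * (volume {x ∈ Set.Ioo a b | M < |w' x|}).toReal) ≤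
      ∫ x in {x ∈ Set.Ioo a b | M < |w' x|},
        (α * (w'' x) ^ 2 + β * Real.log (1 + γ * (w' x) ^ 2)) := by
  classical
  obtain ⟨-, hFTC, -, hw''int, hw''sq⟩ := hH2
  set F : ℝ → ℝ := fun x => α * (w'' x) ^ 2 + β * Real.log (1 + γ * (w' x) ^ 2) with hF
  set A : Set ℝ := {x ∈ Set.Ioo a b | M < |w' x|} with hA
  set L₀ := Real.log (1 + γ * M ^ 2) with hL₀
  set K := 4 * Real.sqrt (2 / 3) * α ^ ((1 : ℝ) / 4) * β ^ ((3 : ℝ) / 4) * L₀ ^ ((3 : ℝ) / 4)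
    with hK
  have hγM : 0 < γ * M ^ 2 := mul_pos hγ (pow_pos hM 2)
  have hL₀pos : 0 < L₀ := Real.log_pos (by linarith)
  have hKnn : 0 ≤ K := by
    rw [hK]; positivity
  -- continuity of w' and openness of A
  have hw'cont : ContinuousOn w' (Icc a b) := by
    have h1 : ContinuousOn (fun x => w' a + ∫ t in a..x, w'' t) (Icc a b) := by
      rw [show Icc a b = uIcc a b from (uIcc_of_le hab.le).symm]
      exact continuousOn_const.add (continuousOn_primitive_interval' hw''int left_mem_uIcc)
    exact h1.congr hFTC
  have hAeq : A = Ioo a b ∩ w' ⁻¹' {y : ℝ | M < |y|} := by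
    rw [hA]; ext x; simp [Set.mem_sep_iff, and_comm]
  have hAopen : IsOpen A := by
    rw [hAeq]
    exact (hw'cont.mono Ioo_subset_Icc_self).isOpen_inter_preimage isOpen_Ioo
      (isOpen_lt continuous_const continuous_abs)
  have hAsub : A ⊆ Ioo a b := fun x hx => hx.1
  have hAvol : volume A < ⊤ :=
    lt_of_le_of_lt (measure_mono hAsub) measure_Ioo_lt_top
  -- decomposition into components
  obtain ⟨C, hCcount, hCunion, hCdisj, hCIoo⟩ := open_subset_decomp hAopen hAsub
  haveI : Countable ↥C := hCcount.to_subtype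
  choose cc dd hc1 hc2 hc3 hc4 hc5 hc6 using fun i : ↥C => hCIoo i.1 i.2
  have hiUnion : ⋃ i : ↥C, (i : Set ℝ) = A := by
    rw [← hCunion, Set.sUnion_eq_iUnion]
  have hmeas : ∀ i : ↥C, MeasurableSet (i : Set ℝ) := fun i => by
    rw [hc4 i]; exact measurableSet_Ioo
  have hdisj : Pairwise (Function.onFun Disjoint fun i : ↥C => (i : Set ℝ)) := by
    intro i j hij
    exact hCdisj i.1 i.2 j.1 j.2 (fun h => hij (Subtype.ext h))
  have hSA : ∀ i : ↥C, (i : Set ℝ) ⊆ A := fun i => by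
    rw [← hCunion]; exact subset_sUnion_of_mem i.2
  -- HasSum facts
  have hS1 : HasSum (fun i : ↥C => ∫ x in (i : Set ℝ), F x) (∫ x in A, F x) := by
    rw [← hiUnion]
    exact hasSum_integral_iUnion hmeas hdisj (hiUnion ▸ hint1)
  have hS2 : HasSum (fun i : ↥C => ∫ x in (i : Set ℝ), |w' x|) (∫ x in A, |w' x|) := by
    rw [← hiUnion]
    exact hasSum_integral_iUnion hmeas hdisj (hiUnion ▸ hint2)
  have hone : IntegrableOn (fun _ : ℝ => (1:ℝ)) A volume :=
    integrableOn_const hAvol.ne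
  have hS3 : HasSum (fun i : ↥C => ∫ _ in (i : Set ℝ), (1:ℝ)) (∫ _ in A, (1:ℝ)) := by
    rw [← hiUnion]
    exact hasSum_integral_iUnion hmeas hdisj (hiUnion ▸ hone)
  have hlen : ∀ i : ↥C, (∫ _ in (i : Set ℝ), (1:ℝ)) = dd i - cc i := fun i => by
    rw [hc4 i, setIntegral_const, Real.volume_real_Ioo_of_le
      (by linarith [hc2 i] : cc i ≤ dd i), smul_eq_mul, mul_one]
  have hAlen : (∫ _ in A, (1:ℝ)) = (volume A).toReal := by
    rw [setIntegral_const, smul_eq_mul, mul_one, Measure.real]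
  have hS3' : HasSum (fun i : ↥C => dd i - cc i) ((volume A).toReal) := by
    rw [← hAlen, ← funext hlen]
    exact hS3
  -- D_i
  set D : ↥C → ℝ := fun i => (∫ x in (i : Set ℝ), |w' x|) - M * (dd i - cc i) with hDdef
  have hSD : HasSum D ((∫ x in A, |w' x|) - M * (volume A).toReal) :=
    hS2.sub (hS3'.mul_left M)
  -- pointwise bounds at boundaries
  have hbound : ∀ i : ↥C, |w' (cc i)| ≤ M ∧ |w' (dd i)| ≤ M := by
    intro i
    constructor
    · rcases (hc1 i).lt_or_eq with h | h
      · by_contra hcon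
        push_neg at hcon
        have : cc i ∈ A := by
          rw [hA]
          exact ⟨⟨h, lt_of_lt_of_le (hc2 i) (hc3 i)⟩, hcon⟩
        exact hc5 i this
      · rw [← h]; exact hwa
    · rcases (hc3 i).lt_or_eq with h | h
      · by_contra hcon
        push_neg at hcon
        have : dd i ∈ A := by
          rw [hA]
          exact ⟨⟨lt_of_le_of_lt (hc1 i) (hc2 i), h⟩, hcon⟩
        exact hc6 i this
      · rw [h]; exact hwb
  -- per-component estimate
  have hcomp : ∀ i : ↥C, K * Real.sqrt (D i) ≤ ∫ x in (i : Set ℝ), F x := by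
    intro i
    have hbig : ∀ x ∈ Ioo (cc i) (dd i), M < |w' x| := by
      intro x hx
      have : x ∈ A := hSA i (by rw [hc4 i]; exact hx)
      rw [hA] at this
      exact this.2
    have hlog : IntegrableOn F (Ioo (cc i) (dd i)) volume := by
      have := hint1.mono_set (hSA i)
      rwa [hc4 i] at this
    have := component_bound α β γ M hα hβ hγ hM (hc1 i) (hc2 i) (hc3 i)
      hFTC hw''int hw''sq hbig (hbound i).1 (hbound i).2 hlog
    rw [hDdef, hK]
    simp only []
    rw [hc4 i]
    exact this
  -- D_i nonneg
  have hDnn : ∀ i : ↥C, 0 ≤ D i := by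
    intro i
    have hconst : IntegrableOn (fun _ : ℝ => M) (Ioo (cc i) (dd i)) volume :=
      integrableOn_const measure_Ioo_lt_top.ne
    have habs : IntegrableOn (fun x => |w' x|) (Ioo (cc i) (dd i)) volume := by
      have := hint2.mono_set (hSA i)
      rwa [hc4 i] at this
    have hmono : (∫ _ in Ioo (cc i) (dd i), M) ≤ ∫ x in Ioo (cc i) (dd i), |w' x| := by
      refine setIntegral_mono_on hconst habs measurableSet_Ioo fun x hx => ?_
      have : x ∈ A := hSA i (by rw [hc4 i]; exact hx)
      rw [hA] at this
      exact this.2.le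
    have hcval : (∫ _ in Ioo (cc i) (dd i), M) = M * (dd i - cc i) := by
      rw [setIntegral_const, Real.volume_real_Ioo_of_le
        (by linarith [hc2 i] : cc i ≤ dd i), smul_eq_mul]
      ring
    rw [hDdef]
    simp only []
    rw [hc4 i]
    linarith [hmono, hcval]
  -- summability and conclusion
  have hFnn : ∀ i : ↥C, 0 ≤ ∫ x in (i : Set ℝ), F x := fun i =>
    le_trans (mul_nonneg hKnn (Real.sqrt_nonneg _)) (hcomp i)
  have hsummT : Summable (fun i : ↥C => ∫ x in (i : Set ℝ), F x) := hS1.summable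
  have hsumsqrt : Summable (fun i : ↥C => Real.sqrt (D i)) := by
    rcases eq_or_lt_of_le hKnn with hK0 | hK0
    · -- K = 0 case: then goal is trivial, but we still need summability here; handle separately
      exfalso
      rw [hK] at hK0
      have h23 : (0:ℝ) < Real.sqrt (2/3) := Real.sqrt_pos.2 (by norm_num)
      have : (0:ℝ) < 4 * Real.sqrt (2/3) * α ^ ((1:ℝ)/4) * β ^ ((3:ℝ)/4) * L₀ ^ ((3:ℝ)/4) := by
        positivity
      linarith [hK0, this]
    · refine Summable.of_nonneg_of_le (fun i => Real.sqrt_nonneg _)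
        (fun i => ?_) (hsummT.mul_left K⁻¹)
      rw [← mul_le_mul_iff_right₀ hK0, ← mul_assoc, mul_inv_cancel₀ (ne_of_gt hK0), one_mul]
      exact hcomp i
  have htsumD : (∫ x in A, |w' x|) - M * (volume A).toReal = ∑' i, D i := (hSD.tsum_eq).symm
  calc K * Real.sqrt ((∫ x in A, |w' x|) - M * (volume A).toReal)
      = K * Real.sqrt (∑' i, D i) := by rw [htsumD]
    _ ≤ K * ∑' i, Real.sqrt (D i) := by
        refine mul_le_mul_of_nonneg_left ?_ hKnn
        exact sqrt_tsum_le_tsum_sqrt hDnn hSD.summable hsumsqrt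
    _ = ∑' i, K * Real.sqrt (D i) := by rw [tsum_mul_left]
    _ ≤ ∑' i : ↥C, ∫ x in (i : Set ℝ), F x :=
        Summable.tsum_le_tsum hcomp (hsumsqrt.mul_left K) hsummT
    _ = ∫ x in A, F x := hS1.tsum_eq
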